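/- For integers p, q with |p| > 1 and |q| > 1, the group G_{p,q} = ⟨x, y | xᵖ = yᵠ⟩ is nonabelian. -/

import Mathlib

/-- The torus-knot-type group ⟨x, y | xᵖ = yᵠ⟩, with x ↦ true, y ↦ false. -/
def TorusRels (p q : ℤ) : Set (FreeGroup Bool) :=
  {FreeGroup.of true ^ p * (FreeGroup.of false ^ q)⁻¹}

private lemma zpow_eq_one_of_natAbs {G : Type*} [Group G] (g : G) (k : ℤ)
    (h : g ^ k.natAbs = 1) : g ^ k = 1 := by
  rcases Int.natAbs_eq k with hk | hk
  · rw [hk, zpow_natCast, h]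
  · rw [hk, zpow_neg, zpow_natCast, h, inv_one]

theorem torus_group_nonabelian (p q : ℤ) (hp : 1 < |p|) (hq : 1 < |q|) :
    ∃ g h : PresentedGroup (TorusRels p q), g * h ≠ h * g := by
  set m := p.natAbs with hm
  set n := q.natAbs with hn
  rw [Int.abs_eq_natAbs] at hp hq
  have hm2 : 2 ≤ m := by omega
  have hn2 : 2 ≤ n := by omega
  set la : List ℕ := List.range m with hla
  set lb : List ℕ := (List.range n).map (· + (m - 1)) with hlb
  have nda : la.Nodup := @List.nodup_range m
  have ndb : lb.Nodup := (@List.nodup_range n).map (fun a b h => by omega)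
  set a : Equiv.Perm ℕ := la.formPerm with haa
  set b : Equiv.Perm ℕ := lb.formPerm with hbb
  have ha : a ^ p = 1 := by
    apply zpow_eq_one_of_natAbs
    have h := List.formPerm_pow_length_eq_one_of_nodup la nda
    rw [hla, List.length_range] at h
    exact h
  have hb : b ^ q = 1 := by
    apply zpow_eq_one_of_natAbs
    have h := List.formPerm_pow_length_eq_one_of_nodup lb ndb
    rw [hlb, List.length_map, List.length_range] at h
    exact h
  set f : Bool → Equiv.Perm ℕ := fun x => cond x a b with hf
  have hrel : ∀ r ∈ TorusRels p q, FreeGroup.lift f r = 1 := by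
    intro r hr
    rcases hr with rfl
    simp [hf, ha, hb]
  refine ⟨PresentedGroup.of true, PresentedGroup.of false, fun hcom => ?_⟩
  have := congrArg (PresentedGroup.toGroup hrel) hcom
  simp only [map_mul, PresentedGroup.toGroup.of, hf, Bool.cond_true, Bool.cond_false] at this
  -- this : a * b = b * a
  have hlen_a : la.length = m := by simp [hla]
  have hlen_b : lb.length = n := by simp [hlb]
  have hbt : b (m - 1) = m := by
    have h1 : (0 + 1) % lb.length = 1 := by
      rw [hlen_b]; exact Nat.mod_eq_of_lt (lt_of_lt_of_le one_lt_two hn2)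
    have key := List.formPerm_apply_getElem lb ndb 0 (by rw [hlen_b]; omega)
    simp only [h1] at key
    have e0 : lb[0]'(by rw [hlen_b]; omega) = m - 1 := by simp [hlb]
    have e1 : lb[1]'(by rw [hlen_b]; omega) = m := by simp [hlb]; omega
    rw [e0, e1, ← hbb] at key
    exact key
  have ham : a m = m := by
    apply List.formPerm_apply_of_notMem
    simp [hla]
  have hat : a (m - 1) = 0 := by
    have h1 : (m - 1 + 1) % la.length = 0 := by
      rw [hlen_a, Nat.sub_add_cancel (le_trans one_le_two hm2), Nat.mod_self]
    have key := List.formPerm_apply_getElem la nda (m - 1) (by rw [hlen_a]; omega)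
    simp only [h1] at key
    have e0 : la[m - 1]'(by rw [hlen_a]; omega) = m - 1 := by simp [hla]
    have e1 : la[0]'(by rw [hlen_a]; omega) = 0 := by simp [hla]
    rw [e0, e1, ← haa] at key
    exact key
  have hb0 : b 0 = 0 := by
    apply List.formPerm_apply_of_notMem
    simp [hlb]
    omega
  have := congrFun (congrArg (fun (e : Equiv.Perm ℕ) => (e : ℕ → ℕ)) this) (m - 1)
  simp only [Equiv.Perm.coe_mul, Function.comp_apply] at this
  rw [hbt, ham, hat, hb0] at this
  omega
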